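/- Let (V,ρ) be an anchored A-module and n ≥ 1. The left A-action on the first tensor factor of Σ_V^{⊗_A n} descends to an A-module structure on Σ_V^{[n]}, and Σ_V^{[n]} is generated as an A-module (for this structure) by the classes of the pure tensors s₁⊗⋯⊗s_n in which, for some 0 ≤ m ≤ n, s_i = (0, v_i) with v_i ∈ V for i ≤ m and s_i = (1,0) for i > m. -/

import Mathlib

universe u

section SigmaPowers

variable {k : Type u} [CommRing k]

/-- The right `A`-action on the Atiyah bimodule `Σ_V = A × V`:
`(b,v)·a = (ba + ρ(v)(a), a•v)`. -/
def rA {A V : Type u} [CommRing A] [Algebra k A] [AddCommGroup V] [Module A V]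
    (ρ : V →ₗ[A] Derivation k A A) (s : A × V) (a : A) : A × V :=
  (s.1 * a + ρ s.2 a, a • s.2)

/-- The left `A`-action on the Atiyah bimodule `Σ_V = A × V`: `a·(b,v) = (ab, a•v)`. -/
def lA {A V : Type u} [CommRing A] [AddCommGroup V] [Module A V]
    (a : A) (s : A × V) : A × V :=
  (a * s.1, a • s.2)

variable (T : ℕ → Type u) [∀ n, AddCommGroup (T n)] [∀ n, Module k (T n)]
  (ins : ∀ n : ℕ, Fin (n + 1) → T n →ₗ[k] T (n + 1))

/-- The `k`-span of the differences `ι_p(x) − ι_q(x)` of unit insertions,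
inside `Σ_V^{⊗(n+1)}`. -/
def relSub (n : ℕ) : Submodule k (T (n + 1)) :=
  Submodule.span k {y | ∃ (x : T n) (p q : Fin (n + 1)), y = ins n p x - ins n q x}

/-- `Σ_V^{[n]}`: the quotient of `Σ_V^{⊗ n}` by the span of the differences of unit
insertions (with `Σ_V^{[0]} = A`, the empty tensor product). -/
def QSig (A : Type u) : ℕ → Type u
  | 0 => A
  | n + 1 => T (n + 1) ⧸ relSub T ins n

instance (A : Type u) [AddCommGroup A] : ∀ n, AddCommGroup (QSig T ins A n)
  | 0 => inferInstanceAs (AddCommGroup A)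
  | n + 1 => inferInstanceAs (AddCommGroup (T (n + 1) ⧸ relSub T ins n))

instance (A : Type u) [AddCommGroup A] [Module k A] : ∀ n, Module k (QSig T ins A n)
  | 0 => inferInstanceAs (Module k A)
  | n + 1 => inferInstanceAs (Module k (T (n + 1) ⧸ relSub T ins n))

/-- The canonical projection `Σ_V^{⊗ n} → Σ_V^{[n]}` (at level `0`, the inverse of the
canonical identification `e0 : A ≅ Σ_V^{⊗ 0}`). -/
def mkQSig {A : Type u} [AddCommGroup A] [Module k A] (e0 : A ≃ₗ[k] T 0) :
    ∀ n, T n → QSig T ins A n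
  | 0 => fun x => e0.symm x
  | _n + 1 => fun x => Submodule.Quotient.mk x

end SigmaPowers



set_option linter.unusedSectionVars false
section Helpers
variable {k A V : Type u} [CommRing k] [CommRing A] [Algebra k A]
  [AddCommGroup V] [Module k V] [Module A V] [IsScalarTower k A V]

lemma lA_one (x : A × V) : lA (1 : A) x = x := by simp [lA]

lemma lA_lA (a b : A) (x : A × V) : lA a (lA b x) = lA (a * b) x := by
  simp [lA, mul_assoc, mul_smul]

lemma lA_add (a : A) (x y : A × V) : lA a (x + y) = lA a x + lA a y := by
  simp [lA, Prod.ext_iff, mul_add, smul_add]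

lemma lA_addA (a b : A) (x : A × V) : lA (a + b) x = lA a x + lA b x := by
  simp [lA, Prod.ext_iff, add_mul, add_smul]

lemma lA_zeroA (x : A × V) : lA (0 : A) x = 0 := by
  simp [lA, Prod.ext_iff]

lemma lA_smul (c : k) (a : A) (x : A × V) : lA a (c • x) = c • lA a x := by
  simp only [lA, Prod.smul_fst, Prod.smul_snd, Prod.ext_iff]
  exact ⟨Algebra.mul_smul_comm c a x.1, smul_comm a c x.2⟩

lemma lA_unit (a : A) : lA a ((1 : A), (0 : V)) = (a, (0 : V)) := by simp [lA]

lemma lA_rA (ρ : V →ₗ[A] Derivation k A A) (a b : A) (x : A × V) :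
    lA a (rA ρ x b) = rA ρ (lA a x) b := by
  simp only [lA, rA, Prod.ext_iff, map_smul]
  constructor
  · rw [Derivation.smul_apply, smul_eq_mul]; ring
  · rw [smul_comm]

lemma rA_unit (ρ : V →ₗ[A] Derivation k A A) (a : A) :
    rA ρ ((1 : A), (0 : V)) a = (a, (0 : V)) := by
  simp [rA]

end Helpers

section Helpers2
variable {k A V : Type u} [CommRing k] [CommRing A] [Algebra k A]
  [AddCommGroup V] [Module k V] [Module A V] [IsScalarTower k A V]

set_option linter.unusedSectionVars false

/-- update/insertNth at a `succAbove` index. -/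
lemma updSuccAbove {β : Type u} {m : ℕ} (p : Fin (m + 1)) (c : β) (f : Fin m → β)
    (j : Fin m) (z : β) :
    Function.update (Fin.insertNth (α := fun _ => β) p c f) (p.succAbove j) z =
      Fin.insertNth (α := fun _ => β) p c (Function.update f j z) := by
  refine (Fin.insertNth_eq_iff.2 ⟨?_, ?_⟩).symm
  · rw [Function.update_of_ne (Fin.succAbove_ne p j).symm]
    exact (Fin.insertNth_apply_same (α := fun _ => β) p c f).symm
  · funext i
    rcases eq_or_ne i j with rfl | hij
    · rw [Function.update_self]
      show z = Function.update (Fin.insertNth (α := fun _ => β) p c f) (p.succAbove i) z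
        (p.succAbove i)
      rw [Function.update_self]
    · rw [Function.update_of_ne hij]
      show f i = Function.update (Fin.insertNth (α := fun _ => β) p c f) (p.succAbove j) z
        (p.succAbove i)
      rw [Function.update_of_ne (fun hh => hij (Fin.succAbove_right_injective hh)),
        Fin.insertNth_apply_succAbove]

lemma transAdd {N : Type u} [AddCommGroup N] {m : ℕ} [NeZero m] (ρ : V →ₗ[A] Derivation k A A)
    (h : (Fin m → A × V) → N)
    (hadd : ∀ (s : Fin m → A × V) (i : Fin m) (x y : A × V),
      h (Function.update s i (x + y)) =
        h (Function.update s i x) + h (Function.update s i y))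
    (a : A) :
    ∀ (s : Fin m → A × V) (i : Fin m) (x y : A × V),
      (fun s => h (Function.update s 0 (lA a (s 0)))) (Function.update s i (x + y)) =
        (fun s => h (Function.update s 0 (lA a (s 0)))) (Function.update s i x) +
          (fun s => h (Function.update s 0 (lA a (s 0)))) (Function.update s i y) := by
  intro s i x y
  simp only
  rcases eq_or_ne i 0 with rfl | hi
  · simp only [Function.update_self, Function.update_idem, lA_add]
    exact hadd s 0 _ _
  · simp only [Function.update_of_ne hi.symm]
    rw [Function.update_comm hi, Function.update_comm hi, Function.update_comm hi]
    exact hadd (Function.update s 0 (lA a (s 0))) i x y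

lemma transBal {N : Type u} [AddCommGroup N] {m : ℕ} [NeZero m] (ρ : V →ₗ[A] Derivation k A A)
    (h : (Fin m → A × V) → N)
    (hbal : ∀ (s : Fin m → A × V) (i j : Fin m), (i : ℕ) + 1 = (j : ℕ) →
      ∀ b : A, h (Function.update s i (rA ρ (s i) b)) =
        h (Function.update s j (lA b (s j))))
    (a : A) :
    ∀ (s : Fin m → A × V) (i j : Fin m), (i : ℕ) + 1 = (j : ℕ) →
      ∀ b : A,
      (fun s => h (Function.update s 0 (lA a (s 0))))
          (Function.update s i (rA ρ (s i) b)) =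
        (fun s => h (Function.update s 0 (lA a (s 0))))
          (Function.update s j (lA b (s j))) := by
  intro s i j hij b
  simp only
  have hj : j ≠ 0 := by
    intro hj0
    rw [hj0] at hij
    rw [Fin.val_zero] at hij
    omega
  rcases eq_or_ne i 0 with rfl | hi
  · -- i = 0
    have hsj : (Function.update s 0 (lA a (s 0))) j = s j := Function.update_of_ne hj _ _
    have key := hbal (Function.update s 0 (lA a (s 0))) 0 j hij b
    rw [Function.update_self, Function.update_idem, hsj] at key
    simp only [Function.update_self, Function.update_idem, Function.update_of_ne hj.symm, lA_rA]
    rw [Function.update_comm hj]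
    exact key
  · rw [Function.update_of_ne hi.symm, Function.update_of_ne hj.symm,
      Function.update_comm hi, Function.update_comm hj]
    have hsi : (Function.update s 0 (lA a (s 0))) i = s i := Function.update_of_ne hi _ _
    have hsj : (Function.update s 0 (lA a (s 0))) j = s j := Function.update_of_ne hj _ _
    have := hbal (Function.update s 0 (lA a (s 0))) i j hij b
    rw [hsi, hsj] at this
    exact this

end Helpers2

section Helpers3
variable {A V : Type u} [CommRing A] [AddCommGroup V]

set_option linter.unusedSectionVars false

/-- Moving a unit entry to the last slot preserves the "v's first, then units" sortedness
from a given position on. -/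
lemma SF_snoc {N : ℕ} (t : Fin (N + 1) → A × V) (p : Fin (N + 1)) (m₀ : ℕ)
    (h : ∀ i : Fin (N + 1), (p : ℕ) + 1 ≤ (i : ℕ) →
      t i = if (i : ℕ) < m₀ then ((0 : A), (t i).2) else ((1 : A), (0 : V))) :
    ∀ i : Fin (N + 1), (p : ℕ) ≤ (i : ℕ) →
      Fin.snoc (α := fun _ => A × V) (p.removeNth t) ((1 : A), (0 : V)) i =
        if (i : ℕ) < min (m₀ - 1) N then
          ((0 : A), (Fin.snoc (α := fun _ => A × V) (p.removeNth t) ((1 : A), (0 : V)) i).2)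
        else ((1 : A), (0 : V)) := by
  intro i hi
  by_cases hiN : (i : ℕ) < N
  · have hlast : i ≠ Fin.last N := by
      intro hh; rw [hh] at hiN; simp at hiN
    have hsnoc : Fin.snoc (α := fun _ => A × V) (p.removeNth t) ((1 : A), (0 : V)) i =
        t ((i.castPred hlast).succ) := by
      conv_lhs => rw [← Fin.castSucc_castPred i hlast]
      rw [Fin.snoc_castSucc]
      show t (p.succAbove (i.castPred hlast)) = _
      congr 1
      apply Fin.succAbove_of_le_castSucc
      rw [Fin.le_def]
      simpa using hi
    rw [hsnoc]
    have hval := h ((i.castPred hlast).succ)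
      (by simp only [Fin.val_succ, Fin.coe_castPred]; omega)
    simp only [Fin.val_succ, Fin.coe_castPred] at hval
    by_cases hm : (i : ℕ) + 1 < m₀
    · rw [if_pos (by omega : (i : ℕ) < min (m₀ - 1) N)]
      exact hval.trans (if_pos hm)
    · rw [if_neg (by omega : ¬ (i : ℕ) < min (m₀ - 1) N)]
      exact hval.trans (if_neg (by omega : ¬ (i : ℕ) + 1 < m₀))
  · have hlast : i = Fin.last N := by
      have := i.isLt; apply Fin.ext; simp only [Fin.val_last]; omega
    rw [hlast, Fin.snoc_last]
    simp only [Fin.val_last]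
    rw [if_neg (by omega : ¬ (N : ℕ) < min (m₀ - 1) N)]

end Helpers3


/-- Let `(V,ρ)` be an anchored `A`-module and `n ≥ 1` (below, `n+1`).  Let `T m` (with
`tt`, `ins`, `e0`) be a realization of the tensor powers `Σ_V^{⊗ m}` of the Atiyah
bimodule, and let `Σ_V^{[m]} = QSig` be the quotient of `Σ_V^{⊗ m}` by the span of the
differences of unit insertions.  Then the left `A`-action on the first tensor factor of
`Σ_V^{⊗(n+1)}` descends to an `A`-module structure `sm` on `Σ_V^{[n+1]}`, and
`Σ_V^{[n+1]}` is generated as an `A`-module (for this structure) by the classes of the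
pure tensors `s₁⊗⋯⊗s_{n+1}` in which, for some `m`, `s_i = (0, v_i)` for `i < m` and
`s_i = (1,0)` for `i ≥ m`. -/
theorem stmt_16 (k A V : Type u) [Field k] [CharZero k] [CommRing A] [Algebra k A]
    [AddCommGroup V] [Module k V] [Module A V] [IsScalarTower k A V]
    (ρ : V →ₗ[A] Derivation k A A)
    (T : ℕ → Type u) [∀ n, AddCommGroup (T n)] [∀ n, Module k (T n)]
    (tt : ∀ n : ℕ, (Fin n → A × V) → T n)
    (ins : ∀ n : ℕ, Fin (n + 1) → T n →ₗ[k] T (n + 1))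
    (e0 : A ≃ₗ[k] T 0)
    (tt_add : ∀ (n : ℕ) (s : Fin n → A × V) (i : Fin n) (x y : A × V),
      tt n (Function.update s i (x + y)) =
        tt n (Function.update s i x) + tt n (Function.update s i y))
    (tt_smul : ∀ (n : ℕ) (s : Fin n → A × V) (i : Fin n) (c : k),
      c • tt n s = tt n (Function.update s i (c • s i)))
    (tt_bal : ∀ (n : ℕ) (s : Fin n → A × V) (i j : Fin n), (i : ℕ) + 1 = (j : ℕ) →
      ∀ a : A, tt n (Function.update s i (rA ρ (s i) a)) =
        tt n (Function.update s j (lA a (s j))))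
    (tt_univ : ∀ n : ℕ, 1 ≤ n → ∀ (N : Type u) [AddCommGroup N]
      (f : (Fin n → A × V) → N),
      (∀ (s : Fin n → A × V) (i : Fin n) (x y : A × V),
        f (Function.update s i (x + y)) =
          f (Function.update s i x) + f (Function.update s i y)) →
      (∀ (s : Fin n → A × V) (i j : Fin n), (i : ℕ) + 1 = (j : ℕ) →
        ∀ a : A, f (Function.update s i (rA ρ (s i) a)) =
          f (Function.update s j (lA a (s j)))) →
      ∃! F : T n →+ N, ∀ s, F (tt n s) = f s)
    (hins : ∀ (n : ℕ), 1 ≤ n → ∀ (p : Fin (n + 1)) (s : Fin n → A × V),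
      ins n p (tt n s) = tt (n + 1) (p.insertNth ((1 : A), (0 : V)) s))
    (hins0 : ∀ (p : Fin 1) (a : A),
      ins 0 p (e0 a) = tt 1 (fun _ => (a, (0 : V)))) :
    ∀ n : ℕ,
      ∃ sm : A → QSig T ins A (n + 1) → QSig T ins A (n + 1),
        -- `sm` is an `A`-module structure on `Σ_V^{[n+1]}` …
        (∀ x, sm 1 x = x) ∧
        (∀ (a b : A) (x), sm (a * b) x = sm a (sm b x)) ∧
        (∀ (a : A) (x y), sm a (x + y) = sm a x + sm a y) ∧
        (∀ (a b : A) (x), sm (a + b) x = sm a x + sm b x) ∧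
        (∀ a : A, sm a 0 = 0) ∧
        (∀ x, sm 0 x = 0) ∧
        -- … obtained by descending the left `A`-action on the first tensor factor
        (∀ (a : A) (s : Fin (n + 1) → A × V),
          sm a (mkQSig T ins e0 (n + 1) (tt (n + 1) s)) =
            mkQSig T ins e0 (n + 1)
              (tt (n + 1) (Function.update s 0 (lA a (s 0))))) ∧
        -- generation: `Σ_V^{[n+1]}` is the `A`-span of the classes of the pure tensors
        -- with entries `(0, vᵢ)` for `i < m` and `(1, 0)` for `i ≥ m`
        (∀ x : QSig T ins A (n + 1),
          x ∈ AddSubgroup.closure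
            {y | ∃ (a : A) (m : ℕ) (vv : Fin (n + 1) → V) (s : Fin (n + 1) → A × V),
              (∀ i : Fin (n + 1),
                s i = if (i : ℕ) < m then ((0 : A), vv i) else ((1 : A), (0 : V))) ∧
              y = sm a (mkQSig T ins e0 (n + 1) (tt (n + 1) s))}) := by
  intro n
  classical
  -- zero entries kill a pure tensor
  have tt_zero : ∀ (m : ℕ) (s : Fin m → A × V) (i : Fin m),
      tt m (Function.update s i (0 : A × V)) = 0 := by
    intro m s i
    have h := tt_add m s i 0 0
    rw [add_zero] at h
    exact left_eq_add.mp h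
  -- the universal property applied to the left action on slot 0
  have hEU : ∀ a : A, ∃! F : T (n + 1) →+ (T (n + 1) ⧸ relSub T ins n),
      ∀ s, F (tt (n + 1) s) =
        Submodule.Quotient.mk
          (tt (n + 1) (Function.update s 0 (lA a (s 0)))) := by
    intro a
    exact tt_univ (n + 1) (Nat.le_add_left 1 n) _
      (fun s => Submodule.Quotient.mk (tt (n + 1) (Function.update s 0 (lA a (s 0)))))
      (transAdd ρ (fun s => Submodule.Quotient.mk (tt (n + 1) s))
        (fun s i x y => by
          show Submodule.Quotient.mk (tt (n + 1) (Function.update s i (x + y))) =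
            Submodule.Quotient.mk (tt (n + 1) (Function.update s i x)) +
              Submodule.Quotient.mk (tt (n + 1) (Function.update s i y))
          rw [tt_add (n + 1) s i x y, Submodule.Quotient.mk_add]) a)
      (transBal ρ (fun s => Submodule.Quotient.mk (tt (n + 1) s))
        (fun s i j hij b => by
          show Submodule.Quotient.mk (tt (n + 1) (Function.update s i (rA ρ (s i) b))) =
            Submodule.Quotient.mk (tt (n + 1) (Function.update s j (lA b (s j))))
          rw [tt_bal (n + 1) s i j hij b]) a)
  have hEx : ∀ a : A, ∃ F : T (n + 1) →+ (T (n + 1) ⧸ relSub T ins n),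
      (∀ s, F (tt (n + 1) s) =
        Submodule.Quotient.mk (tt (n + 1) (Function.update s 0 (lA a (s 0))))) ∧
      ∀ G : T (n + 1) →+ (T (n + 1) ⧸ relSub T ins n),
        (∀ s, G (tt (n + 1) s) =
          Submodule.Quotient.mk (tt (n + 1) (Function.update s 0 (lA a (s 0))))) → G = F :=
    fun a => ⟨(hEU a).choose, (hEU a).choose_spec.1,
      fun G hG => (hEU a).unique hG (hEU a).choose_spec.1⟩
  choose F hFspec hFuniq using hEx
  -- pure tensors generate T (n+1)
  have Htop : ∀ x : T (n + 1), x ∈ AddSubgroup.closure (Set.range (tt (n + 1))) := by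
    have hid := tt_univ (n + 1) (Nat.le_add_left 1 n) (T (n + 1)) (tt (n + 1))
      (tt_add (n + 1)) (tt_bal (n + 1))
    have hsub := tt_univ (n + 1) (Nat.le_add_left 1 n)
      ↥(AddSubgroup.closure (Set.range (tt (n + 1))))
      (fun s => ⟨tt (n + 1) s, AddSubgroup.subset_closure (Set.mem_range_self s)⟩)
      (fun s i x y => Subtype.ext (by
        show tt (n + 1) (Function.update s i (x + y)) =
          tt (n + 1) (Function.update s i x) + tt (n + 1) (Function.update s i y)
        exact tt_add (n + 1) s i x y))
      (fun s i j hij b => Subtype.ext (tt_bal (n + 1) s i j hij b))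
    obtain ⟨F0, hF0, -⟩ := hsub
    have he : (AddSubgroup.closure (Set.range (tt (n + 1)))).subtype.comp F0 =
        AddMonoidHom.id (T (n + 1)) :=
      hid.unique (fun s => congrArg Subtype.val (hF0 s)) (fun s => rfl)
    intro x
    have hx := DFunLike.congr_fun he x
    rw [AddMonoidHom.id_apply] at hx
    rw [← hx]
    exact (F0 x).2
  -- F a is k-linear
  have hFsmul : ∀ (a : A) (c : k) (x : T (n + 1)), F a (c • x) = c • F a x := by
    intro a c x
    refine AddSubgroup.closure_induction (k := Set.range (tt (n + 1)))
      (p := fun x _ => F a (c • x) = c • F a x) ?_ ?_ ?_ ?_ (Htop x)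
    · rintro t ⟨s, rfl⟩
      have h2 : c • tt (n + 1) (Function.update s 0 (lA a (s 0))) =
          tt (n + 1) (Function.update s 0 (c • lA a (s 0))) := by
        rw [tt_smul (n + 1) (Function.update s 0 (lA a (s 0))) 0 c, Function.update_self,
          Function.update_idem]
      rw [tt_smul (n + 1) s 0 c, hFspec, hFspec]
      simp only [Function.update_self, Function.update_idem, lA_smul]
      rw [← Submodule.Quotient.mk_smul, h2]
    · show F a (c • (0 : T (n + 1))) = c • F a 0
      rw [smul_zero, map_zero, smul_zero]
    · intro x y _ _ ihx ihy
      show F a (c • (x + y)) = c • F a (x + y)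
      rw [smul_add, map_add, map_add, ihx, ihy, smul_add]
    · intro x _ ihx
      show F a (c • (-x)) = c • F a (-x)
      rw [smul_neg, map_neg, map_neg, ihx, smul_neg]
  -- F a is constant on the insertion slots
  have hpq : ∀ (a : A) (p q : Fin (n + 1)) (x : T n),
      F a (ins n p x) = F a (ins n q x) := by
    intro a p q x
    rcases Nat.eq_zero_or_pos n with hn0 | hn
    · subst hn0
      have hp := p.isLt
      have hq := q.isLt
      have : p = q := Fin.ext (by omega)
      rw [this]
    · haveI : NeZero n := ⟨by omega⟩
      have hkey : ∀ (p : Fin (n + 1)) (s : Fin n → A × V),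
          F a (ins n p (tt n s)) = Submodule.Quotient.mk
            (ins n p (tt n (Function.update s 0 (lA a (s 0))))) := by
        intro p s
        rw [hins n hn p s, hFspec]
        rcases eq_or_ne p 0 with rfl | hp
        · rw [Fin.insertNth_zero']
          rw [show (Fin.cons ((1 : A), (0 : V)) s : Fin (n + 1) → A × V) 0 =
            ((1 : A), (0 : V)) from Fin.cons_zero _ _]
          rw [lA_unit]
          have hb := tt_bal (n + 1) (Fin.cons ((1 : A), (0 : V)) s) 0 1
            (by rw [Fin.val_zero, Fin.val_one', Nat.mod_eq_of_lt (by omega)]) a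
          rw [Fin.cons_zero, rA_unit] at hb
          rw [hb]
          have h1 : (1 : Fin (n + 1)) = Fin.succ (0 : Fin n) := Fin.succ_zero_eq_one'.symm
          rw [h1, Fin.cons_succ, ← Fin.cons_update]
          rw [hins n hn 0 _, Fin.insertNth_zero']
        · have h0 : p.succAbove (0 : Fin n) = 0 := by
            have hlt : Fin.castSucc (0 : Fin n) < p := by
              have := Fin.pos_of_ne_zero hp
              simpa using this
            rw [Fin.succAbove_of_castSucc_lt p 0 hlt]
            simp
          have h00 : (Fin.insertNth (α := fun _ => A × V) p ((1 : A), (0 : V)) s) 0 = s 0 := by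
            conv_lhs => rw [← h0]
            rw [Fin.insertNth_apply_succAbove]
          rw [h00]
          have hupd := updSuccAbove p ((1 : A), (0 : V)) s (0 : Fin n) (lA a (s 0))
          rw [h0] at hupd
          rw [hupd, ← hins n hn p _]
      have hrel : ∀ y : T n, (Submodule.Quotient.mk (ins n p y) :
          T (n + 1) ⧸ relSub T ins n) = Submodule.Quotient.mk (ins n q y) := by
        intro y
        rw [Submodule.Quotient.eq]
        exact Submodule.subset_span ⟨y, p, q, rfl⟩
      have hEU' := tt_univ n hn (T (n + 1) ⧸ relSub T ins n)
        (fun s => Submodule.Quotient.mk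
          (ins n p (tt n (Function.update s 0 (lA a (s 0))))))
        (transAdd ρ (fun s => Submodule.Quotient.mk (ins n p (tt n s)))
          (fun s i x y => by
            show Submodule.Quotient.mk ((ins n p) (tt n (Function.update s i (x + y)))) =
              Submodule.Quotient.mk ((ins n p) (tt n (Function.update s i x))) +
                Submodule.Quotient.mk ((ins n p) (tt n (Function.update s i y)))
            rw [tt_add n s i x y, map_add, Submodule.Quotient.mk_add]) a)
        (transBal ρ (fun s => Submodule.Quotient.mk (ins n p (tt n s)))
          (fun s i j hij b => by
            show Submodule.Quotient.mk ((ins n p) (tt n (Function.update s i (rA ρ (s i) b)))) =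
              Submodule.Quotient.mk ((ins n p) (tt n (Function.update s j (lA b (s j)))))
            rw [tt_bal n s i j hij b]) a)
      have e1 : (F a).comp (ins n p).toAddMonoidHom = (F a).comp (ins n q).toAddMonoidHom := by
        have h₁ : ∀ s, ((F a).comp (ins n p).toAddMonoidHom) (tt n s) =
            Submodule.Quotient.mk (ins n p (tt n (Function.update s 0 (lA a (s 0))))) :=
          fun s => hkey p s
        have h₂ : ∀ s, ((F a).comp (ins n q).toAddMonoidHom) (tt n s) =
            Submodule.Quotient.mk (ins n p (tt n (Function.update s 0 (lA a (s 0))))) :=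
          fun s => (hkey q s).trans (hrel _).symm
        exact hEU'.unique h₁ h₂
      exact DFunLike.congr_fun e1 x
  -- F a kills the relations
  have hker : ∀ a : A, relSub T ins n ≤ LinearMap.ker
      (LinearMap.mk (σ := RingHom.id k) ⟨F a, (F a).map_add⟩ (hFsmul a)) := by
    intro a
    show Submodule.span k {y | ∃ (x : T n) (p q : Fin (n + 1)),
      y = ins n p x - ins n q x} ≤ _
    rw [Submodule.span_le]
    rintro y ⟨x, p, q, rfl⟩
    simp only [SetLike.mem_coe, LinearMap.mem_ker]
    show F a (ins n p x - ins n q x) = 0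
    rw [map_sub, hpq a p q x, sub_self]
  obtain ⟨SM, hSMmk, hSMadd, hSMzero⟩ :
      ∃ SM : A → (T (n + 1) ⧸ relSub T ins n) → (T (n + 1) ⧸ relSub T ins n),
        (∀ a t, SM a (Submodule.Quotient.mk t) = F a t) ∧
        (∀ a x y, SM a (x + y) = SM a x + SM a y) ∧
        (∀ a, SM a 0 = 0) := by
    refine ⟨fun a => Submodule.liftQ _ (LinearMap.mk (σ := RingHom.id k)
      ⟨F a, (F a).map_add⟩ (hFsmul a)) (hker a), fun a t => ?_, fun a x y => ?_, fun a => ?_⟩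
    · exact Submodule.liftQ_apply _ _ _
    · exact map_add _ x y
    · exact map_zero _
  have hsurj : ∀ x : T (n + 1) ⧸ relSub T ins n, ∃ t, Submodule.Quotient.mk t = x :=
    Submodule.Quotient.mk_surjective _
  -- sm 1 = id
  have hsm1 : ∀ x, SM 1 x = x := by
    intro x
    obtain ⟨t, rfl⟩ := hsurj x
    rw [hSMmk]
    have hspec : ∀ s, (Submodule.mkQ (relSub T ins n)).toAddMonoidHom (tt (n + 1) s) =
        Submodule.Quotient.mk (tt (n + 1) (Function.update s 0 (lA 1 (s 0)))) := by
      intro s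
      rw [lA_one, Function.update_eq_self]
      rfl
    rw [← hFuniq 1 _ hspec]
    rfl
  -- sm (a*b) = sm a ∘ sm b
  have hsmmul : ∀ (a b : A) (x), SM (a * b) x = SM a (SM b x) := by
    intro a b x
    obtain ⟨t, rfl⟩ := hsurj x
    have hspec : ∀ s, (AddMonoidHom.mk' (fun t => SM a (F b t))
        (fun x y => by
          show SM a (F b (x + y)) = SM a (F b x) + SM a (F b y)
          rw [map_add, hSMadd])) (tt (n + 1) s) =
        Submodule.Quotient.mk (tt (n + 1) (Function.update s 0 (lA (a * b) (s 0)))) := by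
      intro s
      show SM a (F b (tt (n + 1) s)) = _
      rw [hFspec b s, hSMmk, hFspec]
      simp only [Function.update_self, Function.update_idem, lA_lA]
    rw [hSMmk, hSMmk, ← hFuniq (a * b) _ hspec]
    rfl
  -- sm (a+b) = sm a + sm b
  have hsmaddA : ∀ (a b : A) (x), SM (a + b) x = SM a x + SM b x := by
    intro a b x
    obtain ⟨t, rfl⟩ := hsurj x
    have hspec : ∀ s, (F a + F b) (tt (n + 1) s) =
        Submodule.Quotient.mk (tt (n + 1) (Function.update s 0 (lA (a + b) (s 0)))) := by
      intro s
      rw [AddMonoidHom.add_apply, hFspec a s, hFspec b s, ← Submodule.Quotient.mk_add,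
        ← tt_add (n + 1) s 0 (lA a (s 0)) (lA b (s 0)), ← lA_addA]
    rw [hSMmk, hSMmk, hSMmk, ← hFuniq (a + b) _ hspec]
    rfl
  -- sm 0 = 0
  have hsm0 : ∀ x, SM 0 x = 0 := by
    intro x
    obtain ⟨t, rfl⟩ := hsurj x
    have hspec : ∀ s, (0 : T (n + 1) →+ T (n + 1) ⧸ relSub T ins n) (tt (n + 1) s) =
        Submodule.Quotient.mk (tt (n + 1) (Function.update s 0 (lA 0 (s 0)))) := by
      intro s
      rw [lA_zeroA, tt_zero (n + 1) s 0]
      rfl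
    rw [hSMmk, ← hFuniq 0 _ hspec]
    rfl
  -- descent formula
  have hdesc : ∀ (a : A) (s : Fin (n + 1) → A × V),
      SM a (Submodule.Quotient.mk (tt (n + 1) s)) =
        Submodule.Quotient.mk (tt (n + 1) (Function.update s 0 (lA a (s 0)))) :=
    fun a s => (hSMmk a _).trans (hFspec a s)
  -- generation
  have hgen : ∀ x : T (n + 1) ⧸ relSub T ins n,
      x ∈ AddSubgroup.closure
        {y | ∃ (a : A) (m : ℕ) (vv : Fin (n + 1) → V) (s : Fin (n + 1) → A × V),
          (∀ i : Fin (n + 1),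
            s i = if (i : ℕ) < m then ((0 : A), vv i) else ((1 : A), (0 : V))) ∧
          y = SM a (Submodule.Quotient.mk (tt (n + 1) s))} := by
    -- move a unit entry to the end
    have hmove : ∀ (p : Fin (n + 1)) (t : Fin (n + 1) → A × V), t p = ((1 : A), (0 : V)) →
        (∃ m₀ : ℕ, ∀ i : Fin (n + 1), (p : ℕ) + 1 ≤ (i : ℕ) →
          t i = if (i : ℕ) < m₀ then ((0 : A), (t i).2) else ((1 : A), (0 : V))) →
        ∃ w : Fin (n + 1) → A × V,
          (∃ m' : ℕ, ∀ i : Fin (n + 1), (p : ℕ) ≤ (i : ℕ) →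
            w i = if (i : ℕ) < m' then ((0 : A), (w i).2) else ((1 : A), (0 : V))) ∧
          (Submodule.Quotient.mk (tt (n + 1) t) : T (n + 1) ⧸ relSub T ins n) =
            Submodule.Quotient.mk (tt (n + 1) w) := by
      rcases Nat.eq_zero_or_pos n with hn0 | hn1
      · subst hn0
        intro p t hp _
        refine ⟨t, ⟨0, fun i hi => ?_⟩, rfl⟩
        rw [if_neg (by omega)]
        have h1 : i = p := by
          have := i.isLt
          have := p.isLt
          exact Fin.ext (by omega)
        rw [h1, hp]
      · intro p t hp hm₀
        refine ⟨Fin.snoc (α := fun _ => A × V) (p.removeNth t) ((1 : A), (0 : V)), ?_, ?_⟩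
        · obtain ⟨m₀, hm⟩ := hm₀
          exact ⟨min (m₀ - 1) n, SF_snoc t p m₀ hm⟩
        · have h1 : t = Fin.insertNth p ((1 : A), (0 : V)) (p.removeNth t) := by
            rw [Fin.insertNth_removeNth, ← hp, Function.update_eq_self]
          conv_lhs => rw [h1]
          rw [← hins n hn1 p _]
          have h2 : Fin.snoc (α := fun _ => A × V) (p.removeNth t) ((1 : A), (0 : V)) =
              Fin.insertNth (Fin.last n) ((1 : A), (0 : V)) (p.removeNth t) :=
            (Fin.insertNth_last' _ _).symm
          rw [h2, ← hins n hn1 (Fin.last n) _]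
          rw [Submodule.Quotient.eq]
          exact Submodule.subset_span ⟨_, p, Fin.last n, rfl⟩
    -- induction on the sorted prefix
    have hQ : ∀ (j : ℕ) (s : Fin (n + 1) → A × V),
        (∃ m : ℕ, ∀ i : Fin (n + 1), j ≤ (i : ℕ) →
          s i = if (i : ℕ) < m then ((0 : A), (s i).2) else ((1 : A), (0 : V))) →
        (Submodule.Quotient.mk (tt (n + 1) s) : T (n + 1) ⧸ relSub T ins n) ∈
          AddSubgroup.closure
            {y | ∃ (a : A) (m : ℕ) (vv : Fin (n + 1) → V) (s : Fin (n + 1) → A × V),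
              (∀ i : Fin (n + 1),
                s i = if (i : ℕ) < m then ((0 : A), vv i) else ((1 : A), (0 : V))) ∧
              y = SM a (Submodule.Quotient.mk (tt (n + 1) s))} := by
      intro j
      induction j with
      | zero =>
        rintro s ⟨m, hm⟩
        apply AddSubgroup.subset_closure
        exact ⟨1, m, fun i => (s i).2, s, fun i => hm i (Nat.zero_le _), (hsm1 _).symm⟩
      | succ j ih =>
        rintro s ⟨m₀, hm⟩
        by_cases hjn : j ≤ n
        swap
        · exact ih s ⟨m₀, fun i hi => absurd i.isLt (by omega)⟩
        obtain ⟨jF, hjFval⟩ : ∃ jF : Fin (n + 1), (jF : ℕ) = j := ⟨⟨j, by omega⟩, rfl⟩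
        have hsplit : (Submodule.Quotient.mk (tt (n + 1) s) :
            T (n + 1) ⧸ relSub T ins n) =
            Submodule.Quotient.mk (tt (n + 1) (Function.update s jF ((s jF).1, (0 : V)))) +
              Submodule.Quotient.mk (tt (n + 1) (Function.update s jF ((0 : A), (s jF).2))) := by
          have h1 : s = Function.update s jF (((s jF).1, (0 : V)) + ((0 : A), (s jF).2)) := by
            rw [show (((s jF).1, (0 : V)) + ((0 : A), (s jF).2) : A × V) = s jF by
              simp [Prod.ext_iff], Function.update_eq_self]
          conv_lhs => rw [h1]
          rw [tt_add, Submodule.Quotient.mk_add]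
        rw [hsplit]
        refine add_mem ?_ ?_
        · -- (b, 0) in slot jF
          have hu : Function.update s jF ((s jF).1, (0 : V)) =
              Function.update (Function.update s jF ((1 : A), (0 : V))) jF
                (lA (s jF).1 ((Function.update s jF ((1 : A), (0 : V))) jF)) := by
            rw [Function.update_self, lA_unit, Function.update_idem]
          rcases Nat.eq_zero_or_pos j with hj0 | hj1
          · -- j = 0
            have hjF0 : jF = 0 := Fin.ext (by rw [Fin.val_zero]; omega)
            have huSF : ∃ m₀' : ℕ, ∀ i : Fin (n + 1), (jF : ℕ) + 1 ≤ (i : ℕ) →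
                (Function.update s jF ((1 : A), (0 : V))) i =
                  if (i : ℕ) < m₀' then
                    ((0 : A), ((Function.update s jF ((1 : A), (0 : V))) i).2)
                  else ((1 : A), (0 : V)) := by
              refine ⟨m₀, fun i hi => ?_⟩
              have hij : i ≠ jF := fun h => by rw [h] at hi; omega
              rw [Function.update_of_ne hij]
              exact hm i (by omega)
            obtain ⟨w, ⟨m', hw⟩, hweq⟩ := hmove jF (Function.update s jF ((1 : A), (0 : V)))
              (Function.update_self _ _ _) huSF
            have he : (Submodule.Quotient.mk (tt (n + 1)
                (Function.update s jF ((s jF).1, (0 : V)))) :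
                  T (n + 1) ⧸ relSub T ins n) =
                SM (s jF).1 (Submodule.Quotient.mk (tt (n + 1)
                  (Function.update s jF ((1 : A), (0 : V))))) := by
              rw [hdesc]
              rw [hjF0] at hu ⊢
              conv_lhs => rw [hu]
            rw [he, hweq]
            apply AddSubgroup.subset_closure
            exact ⟨(s jF).1, m', fun i => (w i).2, w, fun i => hw i (by omega), rfl⟩
          · -- j ≥ 1
            obtain ⟨jF', hjF'val⟩ : ∃ jF' : Fin (n + 1), (jF' : ℕ) = j - 1 :=
              ⟨⟨j - 1, by omega⟩, rfl⟩
            have hne : jF' ≠ jF := fun h => by rw [h] at hjF'val; omega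
            have hb := tt_bal (n + 1) (Function.update s jF ((1 : A), (0 : V))) jF' jF
              (by omega) (s jF).1
            have ht'unit : (Function.update (Function.update s jF ((1 : A), (0 : V))) jF'
                (rA ρ ((Function.update s jF ((1 : A), (0 : V))) jF') (s jF).1)) jF =
                ((1 : A), (0 : V)) := by
              rw [Function.update_of_ne hne.symm, Function.update_self]
            have ht'SF : ∃ m₀' : ℕ, ∀ i : Fin (n + 1), (jF : ℕ) + 1 ≤ (i : ℕ) →
                (Function.update (Function.update s jF ((1 : A), (0 : V))) jF'
                  (rA ρ ((Function.update s jF ((1 : A), (0 : V))) jF') (s jF).1)) i =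
                  if (i : ℕ) < m₀' then ((0 : A),
                    ((Function.update (Function.update s jF ((1 : A), (0 : V))) jF'
                      (rA ρ ((Function.update s jF ((1 : A), (0 : V))) jF') (s jF).1)) i).2)
                  else ((1 : A), (0 : V)) := by
              refine ⟨m₀, fun i hi => ?_⟩
              have hij : i ≠ jF := fun h => by rw [h] at hi; omega
              have hij' : i ≠ jF' := fun h => by
                rw [h] at hi
                omega
              rw [Function.update_of_ne hij', Function.update_of_ne hij]
              exact hm i (by omega)
            obtain ⟨w, ⟨m', hw⟩, hweq⟩ := hmove jF _ ht'unit ht'SF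
            have he : (Submodule.Quotient.mk (tt (n + 1)
                (Function.update s jF ((s jF).1, (0 : V)))) :
                  T (n + 1) ⧸ relSub T ins n) =
                Submodule.Quotient.mk (tt (n + 1)
                  (Function.update (Function.update s jF ((1 : A), (0 : V))) jF'
                    (rA ρ ((Function.update s jF ((1 : A), (0 : V))) jF') (s jF).1))) := by
              conv_lhs => rw [hu]
              rw [← hb]
            rw [he, hweq]
            exact ih w ⟨m', fun i hi => hw i (by omega)⟩
        · -- (0, v) in slot jF
          apply ih
          refine ⟨max m₀ (j + 1), fun i hi => ?_⟩
          rcases eq_or_ne i jF with rfl | hij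
          · simp only [Function.update_self]
            rw [if_pos (by omega)]
          · rw [Function.update_of_ne hij]
            have hge : j + 1 ≤ (i : ℕ) := by
              have : (i : ℕ) ≠ j := fun h => hij (Fin.ext (by omega))
              omega
            have hsi := hm i hge
            by_cases hcase : (i : ℕ) < m₀
            · conv_lhs => rw [hsi, if_pos hcase]
              rw [if_pos (by omega)]
            · conv_lhs => rw [hsi, if_neg hcase]
              rw [if_neg (by omega)]
    -- conclude from generation of T (n+1) by pure tensors
    intro x
    obtain ⟨t, rfl⟩ := hsurj x
    refine AddSubgroup.closure_induction (k := Set.range (tt (n + 1)))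
      (p := fun t _ => (Submodule.Quotient.mk t : T (n + 1) ⧸ relSub T ins n) ∈
        AddSubgroup.closure
          {y | ∃ (a : A) (m : ℕ) (vv : Fin (n + 1) → V) (s : Fin (n + 1) → A × V),
            (∀ i : Fin (n + 1),
              s i = if (i : ℕ) < m then ((0 : A), vv i) else ((1 : A), (0 : V))) ∧
            y = SM a (Submodule.Quotient.mk (tt (n + 1) s))}) ?_ ?_ ?_ ?_ (Htop t)
    · rintro t' ⟨s, rfl⟩
      exact hQ (n + 1) s ⟨0, fun i hi => absurd i.isLt (by omega)⟩
    · show (Submodule.Quotient.mk (0 : T (n + 1)) : T (n + 1) ⧸ relSub T ins n) ∈ _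
      rw [show (Submodule.Quotient.mk (0 : T (n + 1)) :
        T (n + 1) ⧸ relSub T ins n) = 0 from map_zero (Submodule.mkQ _)]
      exact zero_mem _
    · intro x y _ _ hx hy
      show (Submodule.Quotient.mk (x + y) : T (n + 1) ⧸ relSub T ins n) ∈ _
      rw [Submodule.Quotient.mk_add]
      exact add_mem hx hy
    · intro x _ hx
      show (Submodule.Quotient.mk (-x) : T (n + 1) ⧸ relSub T ins n) ∈ _
      rw [show (Submodule.Quotient.mk (-x) :
        T (n + 1) ⧸ relSub T ins n) = -Submodule.Quotient.mk x from map_neg (Submodule.mkQ _) x]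
      exact neg_mem hx
  exact ⟨SM, hsm1, hsmmul, hSMadd, hsmaddA, hSMzero, hsm0, hdesc, hgen⟩
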